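/- Let ψ : [1, ∞) → ℝ satisfy ψ(1) = 0 and α ↦ ψ(α)/(α−1) monotone increasing, with D₁⁺ := inf_{α>1} ψ(α)/(α−1) > −∞ and D∞ := lim_{α→∞} ψ(α)/(α−1). Then for every c ∈ (D₁⁺, D∞) there exist 1 < α_{c,min} < α_c ≤ α_{c,max} < ∞ such that sup over α ∈ [1,∞) \ [α_{c,min}, α_{c,max}] of {(α−1)c − ψ(α)} is at most Ψ⁻(c)/2 < Ψ⁻(c), and Ψ⁻(c) = c(α_c − 1) − ψ(α_c⁻), where ψ(α_c⁻) denotes the left limit of ψ at α_c and Ψ⁻(c) := sup_{α≥1}{c(α−1) − ψ(α)}. -/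

import Mathlib

open Set

/-- Shifted Legendre–Fenchel transform `Ψ⁻(c) = sup_{α≥1} {c(α−1) − ψ(α)}` (real-valued). -/
noncomputable def Psm (ψ : ℝ → ℝ) (c : ℝ) : ℝ :=
  sSup ((fun α => c * (α - 1) - ψ α) '' Set.Ici (1 : ℝ))

/-- `D∞ := lim_{α→∞} ψ(α)/(α−1)`, which equals the supremum by monotonicity. -/
noncomputable def DinfE (ψ : ℝ → ℝ) : EReal :=
  ⨆ α ∈ Set.Ioi (1 : ℝ), ((ψ α / (α - 1) : ℝ) : EReal)

theorem stmt11 (ψ : ℝ → ℝ) (hψ1 : ψ 1 = 0)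
    (hmono : MonotoneOn (fun α => ψ α / (α - 1)) (Set.Ioi (1 : ℝ)))
    (hbdd : BddBelow ((fun α => ψ α / (α - 1)) '' Set.Ioi (1 : ℝ)))
    (c : ℝ)
    (hc1 : sInf ((fun α => ψ α / (α - 1)) '' Set.Ioi (1 : ℝ)) < c)
    (hc2 : (c : EReal) < DinfE ψ) :
    ∃ αmin αc αmax : ℝ, 1 < αmin ∧ αmin < αc ∧ αc ≤ αmax ∧
      (∀ α : ℝ, 1 ≤ α → α ∉ Set.Icc αmin αmax → c * (α - 1) - ψ α ≤ Psm ψ c / 2) ∧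
      Psm ψ c / 2 < Psm ψ c ∧
      Psm ψ c = c * (αc - 1) - Function.leftLim ψ αc := by
  classical
  set h : ℝ → ℝ := fun α => ψ α / (α - 1) with hh
  set f : ℝ → ℝ := fun α => c * (α - 1) - ψ α with hf
  set m : ℝ := sInf (h '' Set.Ioi (1 : ℝ)) with hm
  -- basic facts
  have hm_le : ∀ α : ℝ, 1 < α → m ≤ h α := fun α hα =>
    csInf_le hbdd ⟨α, hα, rfl⟩
  have hψ_eq : ∀ α : ℝ, 1 < α → ψ α = h α * (α - 1) := by
    intro α hα
    have : α - 1 ≠ 0 := by linarith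
    simp only [hh]; rw [div_mul_cancel₀ _ this]
  have hf_eq : ∀ α : ℝ, 1 < α → f α = (c - h α) * (α - 1) := by
    intro α hα
    rw [hf]; simp only; rw [hψ_eq α hα]; ring
  -- α₀ with h α₀ < c
  obtain ⟨y₀, ⟨α₀, hα₀1, rfl⟩, hy₀⟩ :
      ∃ y ∈ h '' Set.Ioi (1 : ℝ), y < c :=
    exists_lt_of_csInf_lt ⟨h 2, ⟨2, by norm_num, rfl⟩⟩ hc1
  rw [Set.mem_Ioi] at hα₀1
  -- α₁ with c < h α₁
  have hc2' : ∃ α₁ : ℝ, 1 < α₁ ∧ c < h α₁ := by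
    rw [DinfE] at hc2
    simp only [lt_iSup_iff, Set.mem_Ioi] at hc2
    obtain ⟨α₁, hα₁, hlt⟩ := hc2
    exact ⟨α₁, hα₁, by exact_mod_cast hlt⟩
  obtain ⟨α₁, hα₁1, hα₁c⟩ := hc2'
  have hmc : m < c := lt_of_le_of_lt (hm_le α₀ hα₀1) hy₀
  have hα₀α₁ : α₀ < α₁ := by
    by_contra hcon
    push_neg at hcon
    exact absurd (hmono (Set.mem_Ioi.2 hα₁1) (Set.mem_Ioi.2 hα₀1) hcon)
      (by simp only [hh] at hy₀ hα₁c ⊢; linarith)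
  -- upper bound on f
  have hf_ub : ∀ α : ℝ, 1 ≤ α → f α ≤ (c - m) * (α₁ - 1) := by
    intro α hα
    rcases eq_or_lt_of_le hα with rfl | hα1
    · simp [hf, hψ1]
      nlinarith
    · rw [hf_eq α hα1]
      rcases le_or_gt α α₁ with hle | hlt
      · have h1 : c - h α ≤ c - m := by have := hm_le α hα1; linarith
        rcases le_or_gt (c - h α) 0 with hn | hp
        · nlinarith
        · nlinarith
      · have : h α₁ ≤ h α := hmono (Set.mem_Ioi.2 hα₁1) (Set.mem_Ioi.2 (by linarith)) hlt.le
        nlinarith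
  have hbddA : BddAbove (f '' Set.Ici (1 : ℝ)) := by
    refine ⟨(c - m) * (α₁ - 1), ?_⟩
    rintro y ⟨α, hα, rfl⟩
    exact hf_ub α hα
  set P : ℝ := Psm ψ c with hP
  have hfP : ∀ α : ℝ, 1 ≤ α → f α ≤ P := by
    intro α hα
    exact le_csSup hbddA ⟨α, hα, rfl⟩
  have hPpos : 0 < P := by
    have h1 : f α₀ ≤ P := hfP α₀ hα₀1.le
    have h2 : 0 < f α₀ := by
      rw [hf_eq α₀ hα₀1]; nlinarith
    linarith
  -- choose δ, αmin, αmax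
  set δ : ℝ := min ((P / 2) / (c - m)) ((α₀ - 1) / 2) with hδ
  have hδpos : 0 < δ := by
    apply lt_min
    · exact div_pos (by linarith) (by linarith)
    · linarith
  have hδcm : δ * (c - m) ≤ P / 2 := by
    have h1 : δ ≤ (P / 2) / (c - m) := min_le_left _ _
    have h2 : (0:ℝ) < c - m := by linarith
    calc δ * (c - m) ≤ (P / 2) / (c - m) * (c - m) :=
          mul_le_mul_of_nonneg_right h1 h2.le
      _ = P / 2 := div_mul_cancel₀ _ h2.ne'
  set αmin : ℝ := 1 + δ with hαmin
  have hαmin1 : 1 < αmin := by simp [hαmin]; linarith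
  have hαminα₀ : αmin < α₀ := by
    have := min_le_right ((P / 2) / (c - m)) ((α₀ - 1) / 2)
    simp only [hαmin]; linarith
  set αmax : ℝ := α₁ with hαmax
  have hminmax : αmin < αmax := by linarith
  -- small-α bound
  have hsmall : ∀ α : ℝ, 1 < α → α < αmin → f α ≤ P / 2 := by
    intro α hα1 hα2
    rw [hf_eq α hα1]
    have h1 : c - h α ≤ c - m := by have := hm_le α hα1; linarith
    have h2 : α - 1 ≤ δ := by simp only [hαmin] at hα2; linarith
    nlinarith
  -- large-α bound
  have hlarge : ∀ α : ℝ, αmax < α → f α ≤ P / 2 := by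
    intro α hα
    rw [hf_eq α (by linarith)]
    have : h α₁ ≤ h α := hmono (Set.mem_Ioi.2 hα₁1) (Set.mem_Ioi.2 (by linarith)) (by linarith)
    nlinarith
  -- the tail bound
  have htail : ∀ α : ℝ, 1 ≤ α → α ∉ Set.Icc αmin αmax → f α ≤ P / 2 := by
    intro α hα hmem
    rw [Set.mem_Icc, not_and_or] at hmem
    push_neg at hmem
    rcases hmem with hlt | hgt
    · rcases eq_or_lt_of_le hα with rfl | hα1
      · simp only [hf, hψ1]; norm_num; linarith
      · exact hsmall α hα1 hlt
    · exact hlarge α hgt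
  -- base point for extension
  set b : ℝ := (1 + αmin) / 2 with hb
  have hb1 : 1 < b := by simp only [hb]; linarith
  have hbmin : b < αmin := by simp only [hb]; linarith
  -- globally monotone extension of h
  set H : ℝ → ℝ := fun α => h (max α b) with hH
  have hHmono : Monotone H := by
    intro x y hxy
    exact hmono (Set.mem_Ioi.2 (lt_of_lt_of_le hb1 (le_max_right x b)))
      (Set.mem_Ioi.2 (lt_of_lt_of_le hb1 (le_max_right y b)))
      (max_le_max hxy le_rfl)
  have hHeq : ∀ α : ℝ, b ≤ α → H α = h α := by
    intro α hα; simp [hH, max_eq_left hα]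
  set Hl : ℝ → ℝ := fun α => Function.leftLim H α with hHl
  -- f tends to g x from the left, where g x = (c - Hl x)*(x-1)
  have hg_tendsto : ∀ x : ℝ, b < x →
      Filter.Tendsto f (nhdsWithin x (Set.Iio x)) (nhds ((c - Hl x) * (x - 1))) := by
    intro x hx
    have hev : ∀ᶠ β in nhdsWithin x (Set.Iio x), f β = (c - H β) * (β - 1) := by
      filter_upwards [Ioo_mem_nhdsLT_of_mem (Set.mem_Ioc.2 ⟨hx, le_rfl⟩)] with β hβ
      rw [hf_eq β (lt_trans hb1 hβ.1), hHeq β hβ.1.le]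
    refine Filter.Tendsto.congr' (Filter.EventuallyEq.symm hev) ?_
    have h1 : Filter.Tendsto H (nhdsWithin x (Set.Iio x)) (nhds (Hl x)) :=
      hHmono.tendsto_leftLim x
    have h2 : Filter.Tendsto (fun β : ℝ => c - H β) (nhdsWithin x (Set.Iio x))
        (nhds (c - Hl x)) := Filter.Tendsto.const_sub c h1
    have h3 : Filter.Tendsto (fun β : ℝ => β - 1) (nhdsWithin x (Set.Iio x))
        (nhds (x - 1)) := by
      exact Filter.Tendsto.sub_const (Filter.tendsto_id.mono_left nhdsWithin_le_nhds) 1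
    exact h2.mul h3
  -- ψ tends to Hl x * (x-1) from the left
  have hψ_tendsto : ∀ x : ℝ, b < x →
      Filter.Tendsto ψ (nhdsWithin x (Set.Iio x)) (nhds (Hl x * (x - 1))) := by
    intro x hx
    have hev : ∀ᶠ β in nhdsWithin x (Set.Iio x), ψ β = H β * (β - 1) := by
      filter_upwards [Ioo_mem_nhdsLT_of_mem (Set.mem_Ioc.2 ⟨hx, le_rfl⟩)] with β hβ
      rw [hψ_eq β (lt_trans hb1 hβ.1), hHeq β hβ.1.le]
    refine Filter.Tendsto.congr' (Filter.EventuallyEq.symm hev) ?_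
    have h1 : Filter.Tendsto H (nhdsWithin x (Set.Iio x)) (nhds (Hl x)) :=
      hHmono.tendsto_leftLim x
    have h3 : Filter.Tendsto (fun β : ℝ => β - 1) (nhdsWithin x (Set.Iio x))
        (nhds (x - 1)) :=
      Filter.Tendsto.sub_const (Filter.tendsto_id.mono_left nhdsWithin_le_nhds) 1
    exact h1.mul h3
  -- near-maximizing sequence in K = Icc αmin αmax
  have hexists : ∀ ε : ℝ, 0 < ε → ∃ α ∈ Set.Icc αmin αmax, P - ε < f α := by
    intro ε hε
    have hε'pos : 0 < min ε (P / 2) := lt_min hε (by linarith)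
    obtain ⟨y, ⟨α, hα, rfl⟩, hy⟩ :
        ∃ y ∈ f '' Set.Ici (1 : ℝ), P - min ε (P / 2) < y := by
      apply exists_lt_of_lt_csSup (Set.Nonempty.image f Set.nonempty_Ici)
      have hPeq : sSup (f '' Set.Ici (1 : ℝ)) = P := rfl
      linarith
    have hα' : α ∈ Set.Icc αmin αmax := by
      by_contra hcon
      have h1 := htail α hα hcon
      have h2 : min ε (P / 2) ≤ P / 2 := min_le_right _ _
      linarith
    exact ⟨α, hα', lt_of_le_of_lt (by linarith [min_le_left ε (P / 2)]) hy⟩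
  choose u hu1 hu2 using fun n : ℕ => hexists (1 / (n + 1)) (by positivity)
  obtain ⟨αc, hαcK, φ, hφmono, hφtend⟩ :
      ∃ αc ∈ Set.Icc αmin αmax, ∃ φ : ℕ → ℕ, StrictMono φ ∧
        Filter.Tendsto (u ∘ φ) Filter.atTop (nhds αc) :=
    isCompact_Icc.tendsto_subseq hu1
  have hαcb : b < αc := lt_of_lt_of_le hbmin hαcK.1
  have hαc1 : 1 < αc := lt_trans hb1 hαcb
  -- the candidate value
  set g : ℝ := (c - Hl αc) * (αc - 1) with hgdef
  -- g ≤ P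
  have hgP : g ≤ P := by
    refine le_of_tendsto (hg_tendsto αc hαcb) ?_
    filter_upwards [Ioo_mem_nhdsLT_of_mem (Set.mem_Ioc.2 ⟨hαcb, le_rfl⟩)] with β hβ
    exact hfP β (le_of_lt (lt_trans hb1 hβ.1))
  -- Hl αc ≤ h αc
  have hHlle : Hl αc ≤ h αc := by
    have := hHmono.leftLim_le (le_refl αc)
    rwa [hHeq αc (le_of_lt hαcb)] at this
  -- pointwise bound to the right of αc
  have hright : ∀ β : ℝ, αc ≤ β → f β ≤ (c - Hl αc) * (β - 1) := by
    intro β hβ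
    have hβ1 : 1 < β := lt_of_lt_of_le hαc1 hβ
    rw [hf_eq β hβ1]
    have h1 : h αc ≤ h β := hmono (Set.mem_Ioi.2 hαc1) (Set.mem_Ioi.2 hβ1) hβ
    nlinarith
  -- the sequence of lower bounds tends to P
  have hlow_tendsto : ∀ ξ : ℕ → ℕ, StrictMono ξ →
      Filter.Tendsto (fun n => P - 1 / ((ξ n : ℝ) + 1)) Filter.atTop (nhds P) := by
    intro ξ hξ
    have h1 : Filter.Tendsto (fun n => 1 / ((ξ n : ℝ) + 1)) Filter.atTop (nhds 0) := by
      apply tendsto_one_div_add_atTop_nhds_zero_nat.comp hξ.tendsto_atTop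
    have := Filter.Tendsto.sub (tendsto_const_nhds (x := P)) h1
    simpa using this
  -- P ≤ g
  have hPg : P ≤ g := by
    by_cases hfreq : ∃ᶠ n in Filter.atTop, u (φ n) < αc
    · -- infinitely many terms below αc : use left limit
      obtain ⟨ξ, hξmono, hξ⟩ := Filter.extraction_of_frequently_atTop hfreq
      have hvt : Filter.Tendsto (fun n => u (φ (ξ n))) Filter.atTop
          (nhdsWithin αc (Set.Iio αc)) := by
        rw [tendsto_nhdsWithin_iff]
        constructor
        · exact hφtend.comp hξmono.tendsto_atTop
        · exact Filter.Eventually.of_forall fun n => hξ n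
      have h1 : Filter.Tendsto (fun n => f (u (φ (ξ n)))) Filter.atTop (nhds g) :=
        (hg_tendsto αc hαcb).comp hvt
      refine le_of_tendsto_of_tendsto' (hlow_tendsto (φ ∘ ξ) (hφmono.comp hξmono)) h1 ?_
      intro n
      exact (hu2 (φ (ξ n))).le
    · -- eventually at or above αc : use right bound
      rw [Filter.not_frequently] at hfreq
      have h1 : Filter.Tendsto (fun n => (c - Hl αc) * (u (φ n) - 1)) Filter.atTop
          (nhds ((c - Hl αc) * (αc - 1))) :=
        tendsto_const_nhds.mul (hφtend.sub_const 1)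
      refine le_of_tendsto_of_tendsto (hlow_tendsto φ hφmono) h1 ?_
      filter_upwards [hfreq] with n hn
      exact le_trans (hu2 (φ n)).le (hright _ (not_lt.mp hn))
  have hgeq : g = P := le_antisymm hgP hPg
  -- αc ≠ αmin
  have hαcmin : αmin < αc := by
    rcases eq_or_lt_of_le hαcK.1 with heq | hlt
    · exfalso
      have hgmin : (c - Hl αmin) * (αmin - 1) ≤ P / 2 := by
        refine le_of_tendsto (hg_tendsto αmin hbmin) ?_
        filter_upwards [Ioo_mem_nhdsLT_of_mem (Set.mem_Ioc.2 ⟨hbmin, le_rfl⟩)] with β hβ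
        exact hsmall β (lt_trans hb1 hβ.1) hβ.2
      rw [heq] at hgmin
      rw [hgdef] at hgeq
      linarith
    · exact hlt
  -- leftLim of ψ at αc
  have hleft : Function.leftLim ψ αc = Hl αc * (αc - 1) := by
    exact leftLim_eq_of_tendsto (hψ_tendsto αc hαcb)
  refine ⟨αmin, αc, αmax, hαmin1, hαcmin, hαcK.2, htail, by linarith, ?_⟩
  rw [hleft, ← hgeq, hgdef]; ring
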